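/- In a cartesian category where all idempotents split and which has final AB-machines (i.e., for all A, B a final coalgebra for machines A × X → B × X exists), the endomorphism ⟨⟨π_out, π₁⟩⟩ on the final machine's state space — the anamorphism of the machine with the same output but identity state update — is idempotent, and its splitting yields an exponential object A ⇒ B making the category cartesian closed. -/

import Mathlib

open CategoryTheory MonoidalCategory CartesianMonoidalCategory

/-- In a cartesian category where idempotents split and final `AB`-machines exist for
all `A, B`, the anamorphism `e` of the machine with the same output as the final machine
but identity state update (characterized as the unique coalgebra homomorphism from
`⟨υ_out, π₁⟩` to `υ`) is idempotent, and splitting it yields an exponential object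
`A ⇒ B`, making the category cartesian closed. -/
theorem stmt_18 {C : Type*} [Category C] [CartesianMonoidalCategory C]
    (T : C → C → C) (υ : ∀ A B : C, A ⊗ T A B ⟶ B ⊗ T A B)
    (hfin : ∀ (A B X : C) (ξ : A ⊗ X ⟶ B ⊗ X),
      ∃! f : X ⟶ T A B, (A ◁ f) ≫ υ A B = ξ ≫ (B ◁ f))
    (hsplit : ∀ (X : C) (f : X ⟶ X), f ≫ f = f →
      ∃ (Y : C) (q : X ⟶ Y) (i : Y ⟶ X), i ≫ q = 𝟙 Y ∧ q ≫ i = f) :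
    ∀ (A B : C) (e : T A B ⟶ T A B),
      (A ◁ e) ≫ υ A B =
          lift (υ A B ≫ fst B (T A B)) (snd A (T A B)) ≫ (B ◁ e) →
      e ≫ e = e ∧
      ∀ (E : C) (q : T A B ⟶ E) (i : E ⟶ T A B), i ≫ q = 𝟙 E → q ≫ i = e →
        ∃ ev : A ⊗ E ⟶ B, ∀ (X : C) (g : A ⊗ X ⟶ B),
          ∃! h : X ⟶ E, (A ◁ h) ≫ ev = g := by
  intro A B e he
  set ξ : A ⊗ T A B ⟶ B ⊗ T A B :=
    lift (υ A B ≫ fst B (T A B)) (snd A (T A B)) with hξ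
  -- intertwining of e with ξ
  have key : (A ◁ e) ≫ ξ = ξ ≫ (B ◁ e) := by
    apply hom_ext
    · have := congrArg (· ≫ fst B (T A B)) he
      simp only [Category.assoc, whiskerLeft_fst] at this
      simp [hξ, Category.assoc, this]
    · simp [hξ]
  obtain ⟨f, hf, huniq⟩ := hfin A B (T A B) ξ
  have he' : e = f := huniq e he
  have hee : e ≫ e = e := by
    have : (A ◁ (e ≫ e)) ≫ υ A B = ξ ≫ (B ◁ (e ≫ e)) := by
      simp only [MonoidalCategory.whiskerLeft_comp, Category.assoc]
      rw [he, hξ, ← Category.assoc, ← hξ, key]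
      simp [Category.assoc]
    rw [huniq (e ≫ e) this, ← he']
  refine ⟨hee, ?_⟩
  intro E q i hiq hqi
  have hie : i ≫ e = i := by rw [← hqi, ← Category.assoc, hiq, Category.id_comp]
  refine ⟨(A ◁ i) ≫ υ A B ≫ fst B (T A B), ?_⟩
  intro X g
  -- key formula for (A ◁ i) ≫ υ
  have hkey : (A ◁ i) ≫ υ A B =
      lift ((A ◁ i) ≫ υ A B ≫ fst B (T A B)) (snd A E ≫ i) := by
    conv_lhs => rw [← hie, MonoidalCategory.whiskerLeft_comp, Category.assoc, he]
    apply hom_ext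
    · simp [hξ, Category.assoc]
    · simp [hξ, Category.assoc, hie]
  obtain ⟨m, hm, hmuniq⟩ := hfin A B X (lift g (snd A X))
  refine ⟨m ≫ q, ?_, ?_⟩
  · have : (A ◁ (m ≫ q ≫ i)) ≫ υ A B ≫ fst B (T A B) = g := by
      rw [hqi, MonoidalCategory.whiskerLeft_comp, Category.assoc]
      have := congrArg (· ≫ fst B (T A B)) he
      simp only [Category.assoc, whiskerLeft_fst] at this
      rw [this]
      have := congrArg (· ≫ fst B (T A B)) hm
      simp only [Category.assoc, whiskerLeft_fst, lift_fst] at this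
      simpa [hξ] using this
    calc (A ◁ (m ≫ q)) ≫ (A ◁ i) ≫ υ A B ≫ fst B (T A B)
        = (A ◁ (m ≫ q ≫ i)) ≫ υ A B ≫ fst B (T A B) := by
          simp [MonoidalCategory.whiskerLeft_comp, Category.assoc]
      _ = g := this
  · intro h' hh'
    -- h' ≫ i is a coalgebra hom from lift g snd
    have hcoalg : (A ◁ (h' ≫ i)) ≫ υ A B = lift g (snd A X) ≫ (B ◁ (h' ≫ i)) := by
      rw [MonoidalCategory.whiskerLeft_comp, Category.assoc, hkey]
      apply hom_ext
      · simpa [Category.assoc] using hh'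
      · simp [Category.assoc]
    have : h' ≫ i = m := hmuniq _ hcoalg
    rw [← Category.comp_id h', ← hiq, ← Category.assoc, this]
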